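/- arXiv:2007.04812 — 8 statements merged into one kernel-verified Lean document; each statement's English description precedes it below -/
import Mathlib

section
/- Let U be an ultrafilter over a set X and W an ultrafilter over a set Y. Then W is U-complete (i.e., for every family ⟨B_x : x ∈ X⟩ of sets in W there exists A ∈ U with ⋂_{x∈A} B_x ∈ W) if and only if the filter product U × W (the filter on X × Y generated by rectangles A × B with A ∈ U, B ∈ W) is an ultrafilter. -/
open Filter
open scoped Classical

/-- For ultrafilters `U` on `X` and `W` on `Y`, `W` is `U`-complete
(for every family `⟨B x : x ∈ X⟩` of sets in `W` there is `A ∈ U` with `⋂_{x ∈ A} B x ∈ W`)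
iff the filter product `U × W` (the filter on `X × Y` generated by rectangles
`A ×ˢ B` with `A ∈ U`, `B ∈ W`, i.e. `Filter.prod`) is an ultrafilter. -/
theorem stmt0 {X Y : Type*} (U : Ultrafilter X) (W : Ultrafilter Y) :
    (∀ B : X → Set Y, (∀ x, B x ∈ W) → ∃ A ∈ U, (⋂ x ∈ A, B x) ∈ W) ↔
      ∃ Z : Ultrafilter (X × Y), (Z : Filter (X × Y)) = (U : Filter X) ×ˢ (W : Filter Y) := by
  have hne : NeBot ((U : Filter X) ×ˢ (W : Filter Y)) := Filter.prod_neBot.2 ⟨U.neBot, W.neBot⟩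
  constructor
  · intro h
    have key : ∀ S : Set (X × Y),
        S ∈ (U : Filter X) ×ˢ (W : Filter Y) ∨ Sᶜ ∈ (U : Filter X) ×ˢ (W : Filter Y) := by
      intro S
      set B : X → Set Y := fun x => {y | (x, y) ∈ S} with hB
      set B' : X → Set Y := fun x => if B x ∈ W then B x else (B x)ᶜ with hB'
      have hB'W : ∀ x, B' x ∈ W := by
        intro x
        by_cases hx : B x ∈ W
        · simpa [hB', hx] using hx
        · simpa [hB', hx] using (Ultrafilter.compl_mem_iff_notMem).2 hx
      obtain ⟨A₀, hA₀, hT⟩ := h B' hB'W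
      set T : Set Y := ⋂ x ∈ A₀, B' x with hTdef
      rcases Ultrafilter.mem_or_compl_mem U {x | B x ∈ W} with hA | hA
      · left
        rw [Filter.mem_prod_iff]
        refine ⟨{x | B x ∈ W} ∩ A₀, inter_mem hA hA₀, T, hT, ?_⟩
        rintro ⟨x, y⟩ ⟨⟨hx1, hx2⟩, hy⟩
        have : y ∈ B' x := Set.mem_iInter₂.1 hy x hx2
        simp only [hB'] at this
        rw [if_pos (show B x ∈ W from hx1)] at this
        exact this
      · right
        rw [Filter.mem_prod_iff]
        refine ⟨{x | B x ∈ W}ᶜ ∩ A₀, inter_mem hA hA₀, T, hT, ?_⟩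
        rintro ⟨x, y⟩ ⟨⟨hx1, hx2⟩, hy⟩
        have : y ∈ B' x := Set.mem_iInter₂.1 hy x hx2
        simp only [hB'] at this
        rw [if_neg (show ¬ B x ∈ W from hx1)] at this
        exact this
    refine ⟨Ultrafilter.ofComplNotMemIff _ (fun s => ?_), rfl⟩
    constructor
    · intro hs
      rcases key s with h1 | h1
      · exact h1
      · exact absurd h1 hs
    · intro hs
      exact Filter.compl_notMem hs
  · rintro ⟨Z, hZ⟩ B hB
    set S : Set (X × Y) := {p | p.2 ∈ B p.1} with hS
    have hSc : Sᶜ ∉ (U : Filter X) ×ˢ (W : Filter Y) := by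
      intro hc
      rw [Filter.mem_prod_iff] at hc
      obtain ⟨A, hA, T, hT, hsub⟩ := hc
      obtain ⟨x, hx⟩ := U.nonempty_of_mem hA
      obtain ⟨y, hy⟩ := W.nonempty_of_mem (inter_mem hT (hB x))
      have : (x, y) ∈ Sᶜ := hsub ⟨hx, hy.1⟩
      exact this hy.2
    have hSmem : S ∈ (U : Filter X) ×ˢ (W : Filter Y) := by
      rw [← hZ] at hSc ⊢
      exact (Ultrafilter.compl_notMem_iff).1 hSc
    rw [Filter.mem_prod_iff] at hSmem
    obtain ⟨A, hA, T, hT, hsub⟩ := hSmem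
    refine ⟨A, hA, mem_of_superset hT ?_⟩
    intro y hy
    exact Set.mem_biInter fun x hx => hsub (Set.mk_mem_prod hx hy)
end

section
/- Let U be an ultrafilter over a set X and W an ultrafilter over a set Y. Then the filter product U × W is an ultrafilter if and only if U × W equals the ultrafilter product U ⊗ W, where U ⊗ W = {A ⊆ X × Y : for U-almost all x, for W-almost all y, (x,y) ∈ A}. -/
open Filter

theorem tensor_le_prod {X Y : Type*} (U : Ultrafilter X) (W : Ultrafilter Y) :
    ((U.bind fun x => W.map (Prod.mk x) : Ultrafilter (X × Y)) : Filter (X × Y)) ≤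
      (U : Filter X) ×ˢ (W : Filter Y) := by
  intro R hR
  rw [Filter.mem_prod_iff] at hR
  obtain ⟨A, hA, B, hB, hAB⟩ := hR
  show {x | Prod.mk x ⁻¹' R ∈ W} ∈ U
  filter_upwards [hA] with x hx
  filter_upwards [hB] with y hy
  exact hAB ⟨hx, hy⟩

/-- For ultrafilters `U` on `X` and `W` on `Y`, the filter product `U × W`
(the filter on `X × Y` generated by rectangles, i.e. `Filter.prod`) is an ultrafilter iff
`U × W` equals the ultrafilter product `U ⊗ W`, where
`R ∈ U ⊗ W ↔ {x | {y | (x,y) ∈ R} ∈ W} ∈ U`. -/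
theorem stmt1 {X Y : Type*} (U : Ultrafilter X) (W : Ultrafilter Y) :
    (∃ Z : Ultrafilter (X × Y), (Z : Filter (X × Y)) = (U : Filter X) ×ˢ (W : Filter Y)) ↔
      ∀ R : Set (X × Y),
        (R ∈ (U : Filter X) ×ˢ (W : Filter Y) ↔ {x : X | {y : Y | (x, y) ∈ R} ∈ W} ∈ U) := by
  set T : Ultrafilter (X × Y) := U.bind fun x => W.map (Prod.mk x) with hT
  have hmem : ∀ R : Set (X × Y), R ∈ T ↔ {x : X | {y : Y | (x, y) ∈ R} ∈ W} ∈ U := by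
    intro R
    rfl
  constructor
  · intro ⟨Z, hZ⟩ R
    have hle : (T : Filter (X × Y)) ≤ (Z : Filter (X × Y)) := by
      rw [hZ]; exact tensor_le_prod U W
    have : T = Z := Ultrafilter.coe_injective (Z.unique hle)
    rw [← hZ, ← this]
    exact hmem R
  · intro h
    refine ⟨T, ?_⟩
    ext R
    rw [Ultrafilter.mem_coe, hmem R, h R]
end

section
/- Let U be an ultrafilter over X and W an ultrafilter over Y. If U × W = U ⊗ W, then W is U-complete: for any family ⟨B_x : x ∈ X⟩ with each B_x ∈ W, there exists A ∈ U such that ⋂_{x∈A} B_x ∈ W. -/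
open Filter

/-- For ultrafilters `U` on `X` and `W` on `Y`, if the filter product `U × W`
equals the ultrafilter product `U ⊗ W` (i.e. `R ∈ U ×ˢ W ↔ {x | {y | (x,y) ∈ R} ∈ W} ∈ U`
for all `R`), then `W` is `U`-complete: for any family `⟨B x : x ∈ X⟩` of sets in `W` there
is `A ∈ U` with `⋂_{x ∈ A} B x ∈ W`. -/
theorem stmt2 {X Y : Type*} (U : Ultrafilter X) (W : Ultrafilter Y)
    (h : ∀ R : Set (X × Y),
      R ∈ (U : Filter X) ×ˢ (W : Filter Y) ↔ {x : X | {y : Y | (x, y) ∈ R} ∈ W} ∈ U) :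
    ∀ B : X → Set Y, (∀ x, B x ∈ W) → ∃ A ∈ U, (⋂ x ∈ A, B x) ∈ W := by
  intro B hB
  have hR : {p : X × Y | p.2 ∈ B p.1} ∈ (U : Filter X) ×ˢ (W : Filter Y) := by
    rw [h]
    exact Filter.univ_mem' fun x => by simpa using hB x
  rw [Filter.mem_prod_iff] at hR
  obtain ⟨A, hA, C, hC, hsub⟩ := hR
  refine ⟨A, hA, W.toFilter.mem_of_superset hC ?_⟩
  intro y hy
  simp only [Set.mem_iInter]
  intro x hx
  exact hsub (Set.mk_mem_prod hx hy)
end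

section
/- Let U and W be ultrafilters over sets X and Y respectively. If the filter product U × W is an ultrafilter, then the pushforward of U ⊗ W under the map flip(x,y) = (y,x) equals W ⊗ U. -/
open Filter

lemma aux3 {X Y : Type*} (U : Ultrafilter X) (W : Ultrafilter Y) (Z : Ultrafilter (X × Y))
    (hZ : (Z : Filter (X × Y)) = (U : Filter X) ×ˢ (W : Filter Y)) (R : Set (X × Y)) :
    R ∈ Z ↔ {x : X | {y : Y | (x, y) ∈ R} ∈ W} ∈ U := by
  constructor
  · intro hR
    have hR2 : R ∈ (U : Filter X) ×ˢ (W : Filter Y) := hZ ▸ hR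
    rw [mem_prod_iff] at hR2
    obtain ⟨A, hA, B, hB, hAB⟩ := hR2
    filter_upwards [hA] with x hx
    filter_upwards [hB] with y hy
    exact hAB ⟨hx, hy⟩
  · intro hR
    by_contra hc
    rw [← Ultrafilter.compl_mem_iff_notMem] at hc
    have hc2 : Rᶜ ∈ (U : Filter X) ×ˢ (W : Filter Y) := hZ ▸ hc
    rw [mem_prod_iff] at hc2
    obtain ⟨A, hA, B, hB, hAB⟩ := hc2
    have : {x : X | {y : Y | (x, y) ∈ R} ∈ W}ᶜ ∈ U := by
      filter_upwards [hA] with x hx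
      simp only [Set.mem_compl_iff, Set.mem_setOf_eq]
      rw [← Ultrafilter.compl_mem_iff_notMem]
      filter_upwards [hB] with y hy
      exact hAB ⟨hx, hy⟩
    exact (Ultrafilter.compl_mem_iff_notMem.mp this) hR

/-- For ultrafilters `U` on `X` and `W` on `Y`, if the filter product `U × W`
(i.e. `Filter.prod`) is an ultrafilter, then the pushforward of the ultrafilter product
`U ⊗ W` under `flip (x, y) = (y, x)` equals `W ⊗ U`.  Membership of `S ⊆ Y × X` in the
pushforward is `{x | {y | (y, x) ∈ S} ∈ W} ∈ U`, and membership in `W ⊗ U` is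
`{y | {x | (y, x) ∈ S} ∈ U} ∈ W`. -/
theorem stmt3 {X Y : Type*} (U : Ultrafilter X) (W : Ultrafilter Y)
    (h : ∃ Z : Ultrafilter (X × Y), (Z : Filter (X × Y)) = (U : Filter X) ×ˢ (W : Filter Y)) :
    ∀ S : Set (Y × X),
      ({x : X | {y : Y | (y, x) ∈ S} ∈ W} ∈ U ↔ {y : Y | {x : X | (y, x) ∈ S} ∈ U} ∈ W) := by
  obtain ⟨Z, hZ⟩ := h
  intro S
  have h1 : {x : X | {y : Y | (y, x) ∈ S} ∈ W} ∈ U ↔ Prod.swap ⁻¹' S ∈ Z :=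
    (aux3 U W Z hZ (Prod.swap ⁻¹' S)).symm
  have hswap : ((Z.map Prod.swap : Ultrafilter (Y × X)) : Filter (Y × X))
      = (W : Filter Y) ×ˢ (U : Filter X) := by
    simp only [Ultrafilter.coe_map, hZ]
    exact prod_comm.symm
  have h2 : {y : Y | {x : X | (y, x) ∈ S} ∈ U} ∈ W ↔ S ∈ Z.map Prod.swap :=
    (aux3 W U (Z.map Prod.swap) hswap S).symm
  rw [h1, h2]
  rfl
end

section
/- Let U and W be ultrafilters on sets X and Y. W is U-complete if and only if U is W-complete. -/
open Filter

/-- `W` is `U`-complete iff every subset of `X × Y` contains, or its complement contains,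
a "rectangle" `s ×ˢ t` with `s ∈ U`, `t ∈ W`. -/
lemma ucomplete_iff_rect {X Y : Type*} (U : Ultrafilter X) (W : Ultrafilter Y) :
    (∀ B : X → Set Y, (∀ x, B x ∈ W) → ∃ A ∈ U, (⋂ x ∈ A, B x) ∈ W) ↔
    (∀ S : Set (X × Y),
      (∃ s ∈ U, ∃ t ∈ W, ∀ x ∈ s, ∀ y ∈ t, (x, y) ∈ S) ∨
      (∃ s ∈ U, ∃ t ∈ W, ∀ x ∈ s, ∀ y ∈ t, (x, y) ∉ S)) := by
  classical
  constructor
  · intro h S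
    set T : Set X := {x | {y | (x, y) ∈ S} ∈ W} with hT
    rcases U.mem_or_compl_mem T with hTU | hTU
    · left
      set B : X → Set Y := fun x => if x ∈ T then {y | (x, y) ∈ S} else Set.univ with hB
      have hBW : ∀ x, B x ∈ W := by
        intro x
        by_cases hx : x ∈ T
        · simp only [hB, if_pos hx]; exact hx
        · simp only [hB, if_neg hx]; exact Filter.univ_mem
      obtain ⟨A, hAU, hAI⟩ := h B hBW
      refine ⟨A ∩ T, U.toFilter.inter_mem hAU hTU, ⋂ x ∈ A, B x, hAI, ?_⟩
      intro x hx y hy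
      have hyB : y ∈ B x := Set.mem_iInter₂.mp hy x hx.1
      simpa [hB, hx.2] using hyB
    · right
      set B : X → Set Y := fun x => if x ∈ T then Set.univ else {y | (x, y) ∉ S} with hB
      have hBW : ∀ x, B x ∈ W := by
        intro x
        by_cases hx : x ∈ T
        · simp only [hB, if_pos hx]; exact Filter.univ_mem
        · have h0 : {y | (x, y) ∈ S} ∉ W := hx
          have h' : {y | (x, y) ∈ S}ᶜ ∈ W := (Ultrafilter.compl_mem_iff_notMem).mpr h0
          simp only [hB, if_neg hx]
          simpa [Set.compl_setOf] using h'
      obtain ⟨A, hAU, hAI⟩ := h B hBW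
      refine ⟨A ∩ Tᶜ, U.toFilter.inter_mem hAU hTU, ⋂ x ∈ A, B x, hAI, ?_⟩
      intro x hx y hy
      have hyB : y ∈ B x := Set.mem_iInter₂.mp hy x hx.1
      have hxT : x ∉ T := hx.2
      simpa [hB, hxT] using hyB
  · intro h B hBW
    rcases h {p : X × Y | p.2 ∈ B p.1} with ⟨s, hs, t, ht, hst⟩ | ⟨s, hs, t, ht, hst⟩
    · refine ⟨s, hs, W.toFilter.mem_of_superset ht ?_⟩
      intro y hy
      exact Set.mem_iInter₂.mpr fun x hx => hst x hx y hy
    · obtain ⟨x, hx⟩ := U.nonempty_of_mem hs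
      have hc : (B x)ᶜ ∈ W :=
        W.toFilter.mem_of_superset ht fun y hy => hst x hx y hy
      exact absurd (hBW x) ((Ultrafilter.compl_mem_iff_notMem).mp hc)

/-- For ultrafilters `U` on `X` and `W` on `Y`, `W` is `U`-complete iff `U` is
`W`-complete, where `W` is `U`-complete means: for every family `⟨B x : x ∈ X⟩` of sets in
`W` there is `A ∈ U` with `⋂_{x ∈ A} B x ∈ W`. -/
theorem stmt4 {X Y : Type*} (U : Ultrafilter X) (W : Ultrafilter Y) :
    (∀ B : X → Set Y, (∀ x, B x ∈ W) → ∃ A ∈ U, (⋂ x ∈ A, B x) ∈ W) ↔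
      (∀ C : Y → Set X, (∀ y, C y ∈ U) → ∃ D ∈ W, (⋂ y ∈ D, C y) ∈ U) := by
  rw [ucomplete_iff_rect U W, ucomplete_iff_rect W U]
  constructor
  · intro h S
    rcases h {p : X × Y | (p.2, p.1) ∈ S} with ⟨s, hs, t, ht, hst⟩ | ⟨s, hs, t, ht, hst⟩
    · exact Or.inl ⟨t, ht, s, hs, fun y hy x hx => hst x hx y hy⟩
    · exact Or.inr ⟨t, ht, s, hs, fun y hy x hx => hst x hx y hy⟩
  · intro h S
    rcases h {p : Y × X | (p.2, p.1) ∈ S} with ⟨s, hs, t, ht, hst⟩ | ⟨s, hs, t, ht, hst⟩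
    · exact Or.inl ⟨t, ht, s, hs, fun x hx y hy => hst y hy x hx⟩
    · exact Or.inr ⟨t, ht, s, hs, fun x hx y hy => hst y hy x hx⟩
end

section
/- Suppose U is an ultrafilter on a set X and ⟨λ_α : α < η⟩ is an increasing sequence of infinite cardinals such that U is λ_α-decomposable for every α < η. Then there is a cardinal δ with sup_{α<η} λ_α ≤ δ ≤ ∏_{α<η} λ_α such that U is δ-decomposable. -/
open Cardinal

/-- `f : X → γ.out` is a `γ`-decomposition of `U` when every `A ∈ U` has image of
cardinality `γ`; `U` is `γ`-decomposable if such an `f` exists. (The type `γ.out` has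
cardinality exactly `γ`.) -/
def IsDecomposable {X : Type u} (U : Ultrafilter X) (γ : Cardinal.{u}) : Prop :=
  ∃ f : X → Quotient.out γ, ∀ A ∈ U, #(f '' A) = γ

/-- Lipparini: If `U` is an ultrafilter on `X` and `⟨λ i⟩` is an increasing
sequence of infinite cardinals such that `U` is `λ i`-decomposable for every `i`, then there
is a cardinal `δ` with `sup λ i ≤ δ ≤ ∏ λ i` such that `U` is `δ`-decomposable. -/
theorem stmt6 {X : Type u} (U : Ultrafilter X) {ι : Type u} [LinearOrder ι] [Nonempty ι]
    (lam : ι → Cardinal.{u}) (hmono : StrictMono lam) (hinf : ∀ i, ℵ₀ ≤ lam i)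
    (hdec : ∀ i, IsDecomposable U (lam i)) :
    ∃ δ : Cardinal.{u}, (⨆ i, lam i) ≤ δ ∧ δ ≤ Cardinal.prod lam ∧ IsDecomposable U δ := by
  choose f hf using hdec
  set g : X → (∀ i, Quotient.out (lam i)) := fun x i => f i x with hg
  -- the set of cardinalities of images of sets in U
  set S : Set Cardinal.{u} := {c | ∃ A ∈ U, #(g '' A) = c} with hS
  have hSne : S.Nonempty := ⟨#(g '' Set.univ), Set.univ, Filter.univ_mem, rfl⟩
  obtain ⟨δ, ⟨A₀, hA₀U, hA₀⟩, hmin⟩ := wellFounded_lt.has_min S hSne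
  -- every image g '' A (A ∈ U) projects onto f i '' A
  have hproj : ∀ (i : ι) (A : Set X), #((f i) '' A) ≤ #(g '' A) := by
    intro i A
    refine Cardinal.mk_le_of_surjective (f := fun y : (g '' A) =>
      (⟨y.1 i, ?_⟩ : ((f i) '' A))) ?_
    · obtain ⟨x, hx, hxy⟩ := y.2
      exact ⟨x, hx, congrFun hxy i⟩
    · rintro ⟨z, x, hx, rfl⟩
      exact ⟨⟨g x, x, hx, rfl⟩, rfl⟩
  have hlam : ∀ i, lam i ≤ δ := by
    intro i
    rw [← hA₀, ← hf i A₀ hA₀U]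
    exact hproj i A₀
  have hδinf : ℵ₀ ≤ δ := (hinf (Classical.arbitrary ι)).trans (hlam _)
  have hδne : δ ≠ 0 := ne_of_gt (lt_of_lt_of_le Cardinal.aleph0_pos hδinf)
  have hout : Nonempty (Quotient.out δ) := by
    rw [← Cardinal.mk_ne_zero_iff, Cardinal.mk_out]; exact hδne
  -- an equivalence between g '' A₀ and δ.out
  have heq : Nonempty ((g '' A₀ : Set _) ≃ Quotient.out δ) := by
    rw [← Cardinal.eq, hA₀, Cardinal.mk_out]
  obtain ⟨e⟩ := heq
  refine ⟨δ, ciSup_le hlam, ?_, ?_⟩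
  · rw [← hA₀]
    calc #(g '' A₀) ≤ #(∀ i, Quotient.out (lam i)) := Cardinal.mk_set_le _
      _ = Cardinal.prod lam := by rw [Cardinal.mk_pi]; simp [Cardinal.mk_out]
  · classical
    refine ⟨fun x => if hx : g x ∈ g '' A₀ then e ⟨g x, hx⟩ else Classical.arbitrary _, ?_⟩
    intro A hA
    set h : X → Quotient.out δ :=
      fun x => if hx : g x ∈ g '' A₀ then e ⟨g x, hx⟩ else Classical.arbitrary _ with hh
    -- upper bound
    refine le_antisymm (le_trans (Cardinal.mk_set_le _) (le_of_eq (Cardinal.mk_out δ))) ?_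
    -- lower bound: use B = A ∩ A₀ ∈ U
    set B := A ∩ A₀ with hB
    have hBU : B ∈ U := Filter.inter_mem hA hA₀U
    have hBmin : δ ≤ #(g '' B) := by
      by_contra hlt
      exact hmin _ ⟨B, hBU, rfl⟩ (lt_of_not_ge hlt)
    have hinj : #(g '' B) ≤ #(h '' B) := by
      have hmem : ∀ y : (g '' B : Set _), (y : ∀ i, Quotient.out (lam i)) ∈ g '' A₀ := by
        rintro ⟨y, x, hx, rfl⟩
        exact ⟨x, hx.2, rfl⟩
      refine Cardinal.mk_le_of_injective (f := fun y : (g '' B) =>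
        (⟨e ⟨y.1, hmem y⟩, ?_⟩ : (h '' B))) ?_
      · obtain ⟨x, hx, hyx⟩ := y.2
        refine ⟨x, hx, ?_⟩
        have hx0 : g x ∈ g '' A₀ := ⟨x, hx.2, rfl⟩
        simp only [hh, dif_pos hx0]
        congr 1
        exact Subtype.ext hyx
      · intro y₁ y₂ hy
        have h1 : e ⟨y₁.1, hmem y₁⟩ = e ⟨y₂.1, hmem y₂⟩ := congrArg Subtype.val hy
        have h2 : (⟨y₁.1, hmem y₁⟩ : (g '' A₀ : Set _)) = ⟨y₂.1, hmem y₂⟩ := e.injective h1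
        exact Subtype.ext (Subtype.mk_eq_mk.mp h2)
    calc δ ≤ #(g '' B) := hBmin
      _ ≤ #(h '' B) := hinj
      _ ≤ #(h '' A) := Cardinal.mk_le_mk_of_subset (Set.image_mono Set.inter_subset_left)
end

section
/- Suppose κ is an uncountable cardinal, M ⊆ V is a transitive model of ZFC with the κ-approximation property, and U is a κ-complete ultrafilter over a set X ∈ M. Then U ∩ M ∈ M. -/
open Cardinal

universe u

/-- A transitive class `M ⊆ V` that is a model of ZFC (we record transitivity together with
the instances of the ZFC axioms in `M` that are relevant here: emptyset, infinity, pairing,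
union, relative powerset, and closure under intersections and differences). -/
structure IsTransitiveZFCModel (M : Set ZFSet.{u}) : Prop where
  transitive : ∀ x ∈ M, ∀ y ∈ x, y ∈ M
  empty_mem : (∅ : ZFSet.{u}) ∈ M
  omega_mem : ZFSet.omega ∈ M
  pair_mem : ∀ x ∈ M, ∀ y ∈ M, ({x, y} : ZFSet) ∈ M
  sUnion_mem : ∀ x ∈ M, ZFSet.sUnion x ∈ M
  powersetRel_mem : ∀ x ∈ M, ZFSet.sep (· ∈ M) (ZFSet.powerset x) ∈ M
  inter_mem : ∀ x ∈ M, ∀ y ∈ M, x ∩ y ∈ M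
  diff_mem : ∀ x ∈ M, ∀ y ∈ M, x \ y ∈ M

/-- Suppose `κ` is an uncountable cardinal, `M ⊆ V` is a transitive model of ZFC
with the `κ`-approximation property, and `U` is a `κ`-complete ultrafilter over a set
`X ∈ M`.  Then `U ∩ M ∈ M`. -/
theorem stmt9 (κ : Cardinal.{u + 1}) (hκ : ℵ₀ < κ)
    (M : Set ZFSet.{u}) (hM : IsTransitiveZFCModel M)
    -- the κ-approximation property: every set `A ⊆ M` all of whose small approximations
    -- `A ∩ σ` (for `σ ∈ M` of size `< κ`) lie in `M` is itself in `M`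
    (happrox : ∀ A : ZFSet.{u}, A.toSet ⊆ M →
      (∀ σ ∈ M, #σ.toSet < κ → A ∩ σ ∈ M) → A ∈ M)
    (X : ZFSet.{u}) (hX : X ∈ M)
    -- `U` is an ultrafilter over `X` ...
    (U : ZFSet.{u}) (hUsub : ∀ A ∈ U, A ⊆ X) (hproper : (∅ : ZFSet.{u}) ∉ U)
    (hup : ∀ A ∈ U, ∀ B : ZFSet.{u}, A ⊆ B → B ⊆ X → B ∈ U)
    (hint : ∀ A ∈ U, ∀ B ∈ U, A ∩ B ∈ U)
    (hultra : ∀ A : ZFSet.{u}, A ⊆ X → A ∈ U ∨ X \ A ∈ U)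
    -- ... that is κ-complete: intersections of fewer than κ members of U are in U
    (hcomplete : ∀ σ : ZFSet.{u}, σ ≠ ∅ → σ ⊆ U → #σ.toSet < κ → ZFSet.sInter σ ∈ U) :
    ZFSet.sep (· ∈ M) U ∈ M := by
  classical
  apply happrox
  · intro B hB
    exact (ZFSet.mem_sep.1 hB).2
  · intro σ hσ hσκ
    -- τ : the elements of σ that are subsets of X
    set P := ZFSet.sep (· ∈ M) (ZFSet.powerset X) with hPdef
    have hPM : P ∈ M := hM.powersetRel_mem X hX
    set τ := σ ∩ P with hτdef
    have hτM : τ ∈ M := hM.inter_mem σ hσ P hPM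
    have hτmem : ∀ B : ZFSet, B ∈ τ ↔ B ∈ σ ∧ B ⊆ X := by
      intro B
      simp only [hτdef, hPdef, ZFSet.mem_inter, ZFSet.mem_sep, ZFSet.mem_powerset]
      constructor
      · rintro ⟨h1, h2, _⟩; exact ⟨h1, h2⟩
      · rintro ⟨h1, h2⟩; exact ⟨h1, h2, hM.transitive σ hσ B h1⟩
    clear_value τ
    rcases ZFSet.eq_empty_or_nonempty τ with hτe | ⟨B₀, hB₀⟩
    · have : ZFSet.sep (· ∈ M) U ∩ σ = ∅ := by
        rw [ZFSet.eq_empty]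
        intro B hB
        rw [ZFSet.mem_inter, ZFSet.mem_sep] at hB
        have : B ∈ τ := (hτmem B).2 ⟨hB.2, hUsub B hB.1.1⟩
        rw [hτe] at this
        exact ZFSet.notMem_empty B this
      rw [this]; exact hM.empty_mem
    · -- f B : the member of U among B, X \ B
      set f : ZFSet.{u} → ZFSet.{u} := fun B => if B ∈ U then B else X \ B with hfdef
      haveI : ZFSet.Definable₁ f := Classical.allZFSetDefinable _
      set S := ZFSet.image f τ with hSdef
      have hSU : ∀ C : ZFSet, C ∈ S → C ∈ U := by
        intro C hC
        rcases ZFSet.mem_image.1 hC with ⟨B, hB, rfl⟩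
        by_cases hBU : B ∈ U
        · simpa [hfdef, hBU] using hBU
        · have := (hultra B ((hτmem B).1 hB).2).resolve_left hBU
          simpa [hfdef, hBU] using this
      have hSne : S ≠ ∅ := by
        rw [Ne, ZFSet.eq_empty]
        push_neg
        exact ⟨f B₀, ZFSet.mem_image.2 ⟨B₀, hB₀, rfl⟩⟩
      have hScard : #S.toSet < κ := by
        have h1 : S.toSet = f '' τ.toSet := ZFSet.coe_image f τ
        have h2 : #S.toSet ≤ #τ.toSet := by rw [h1]; exact Cardinal.mk_image_le
        have h3 : #τ.toSet ≤ #σ.toSet :=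
          Cardinal.mk_le_mk_of_subset (fun B hB => ((hτmem B).1 hB).1)
        exact lt_of_le_of_lt (h2.trans h3) hσκ
      have hIU : ZFSet.sInter S ∈ U := hcomplete S hSne (fun C hC => hSU C hC) hScard
      have hIne : ZFSet.sInter S ≠ ∅ := fun h => hproper (h ▸ hIU)
      obtain ⟨x, hx⟩ : ∃ x, x ∈ ZFSet.sInter S := by
        by_contra h; push_neg at h; exact hIne ((ZFSet.eq_empty _).2 h)
      -- x decides membership in U for all elements of τ
      have hxdec : ∀ B : ZFSet, B ∈ τ → (B ∈ U ↔ x ∈ B) := by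
        intro B hB
        have hxf : x ∈ f B := ZFSet.mem_of_mem_sInter hx (ZFSet.mem_image.2 ⟨B, hB, rfl⟩)
        by_cases hBU : B ∈ U
        · simp only [hfdef, if_pos hBU] at hxf
          exact ⟨fun _ => hxf, fun _ => hBU⟩
        · simp only [hfdef, if_neg hBU] at hxf
          exact ⟨fun h => absurd h hBU, fun h => absurd h (ZFSet.mem_sdiff.1 hxf).2⟩
      have hxX : x ∈ X := by
        have hxf : x ∈ f B₀ := ZFSet.mem_of_mem_sInter hx (ZFSet.mem_image.2 ⟨B₀, hB₀, rfl⟩)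
        by_cases hBU : B₀ ∈ U
        · simp only [hfdef, if_pos hBU] at hxf
          exact ((hτmem B₀).1 hB₀).2 hxf
        · simp only [hfdef, if_neg hBU] at hxf
          exact (ZFSet.mem_sdiff.1 hxf).1
      have hxM : x ∈ M := hM.transitive X hX x hxX
      have hxxM : ({x, x} : ZFSet) ∈ M := hM.pair_mem x hxM x hxM
      have hXxM : X \ ({x, x} : ZFSet) ∈ M := hM.diff_mem X hX _ hxxM
      set Q := ZFSet.sep (· ∈ M) (ZFSet.powerset (X \ ({x, x} : ZFSet))) with hQdef
      have hQM : Q ∈ M := hM.powersetRel_mem _ hXxM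
      have hfin : ZFSet.sep (· ∈ M) U ∩ σ = τ \ (τ ∩ Q) := by
        apply ZFSet.ext
        intro B
        rw [ZFSet.mem_inter, ZFSet.mem_sep, ZFSet.mem_sdiff, ZFSet.mem_inter]
        constructor
        · rintro ⟨⟨hBU, hBM⟩, hBσ⟩
          have hBτ : B ∈ τ := (hτmem B).2 ⟨hBσ, hUsub B hBU⟩
          refine ⟨hBτ, fun hcon => ?_⟩
          have hBQ := hcon.2
          rw [hQdef, ZFSet.mem_sep, ZFSet.mem_powerset] at hBQ
          have hxB : x ∈ B := (hxdec B hBτ).1 hBU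
          have := hBQ.1 hxB
          rw [ZFSet.mem_sdiff] at this
          exact this.2 (ZFSet.mem_pair.2 (Or.inl rfl))
        · rintro ⟨hBτ, hcon⟩
          have hBσ : B ∈ σ := ((hτmem B).1 hBτ).1
          have hBX : B ⊆ X := ((hτmem B).1 hBτ).2
          have hBM : B ∈ M := hM.transitive σ hσ B hBσ
          have hBnQ : B ∉ Q := fun h => hcon ⟨hBτ, h⟩
          rw [hQdef, ZFSet.mem_sep, ZFSet.mem_powerset] at hBnQ
          push_neg at hBnQ
          have hnsub : ¬ B ⊆ X \ ({x, x} : ZFSet) := fun h => (hBnQ h) hBM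
          rw [ZFSet.subset_def] at hnsub
          push_neg at hnsub
          obtain ⟨y, hyB, hyn⟩ := hnsub
          rw [ZFSet.mem_sdiff] at hyn
          push_neg at hyn
          have hyx : y = x := by
            have := hyn (hBX hyB)
            rcases ZFSet.mem_pair.1 this with h | h <;> exact h
          have hxB : x ∈ B := hyx ▸ hyB
          exact ⟨⟨(hxdec B hBτ).2 hxB, hBM⟩, hBσ⟩
      rw [hfin]
      exact hM.diff_mem τ hτM _ (hM.inter_mem τ hτM Q hQM)
end

section
/- Suppose U is a countably complete ultrafilter on a set X, γ is a cardinal of countable cofinality, and ⟨λ_n : n < ω⟩ is an increasing sequence of cardinals cofinal in γ such that U is λ_n-decomposable for every n. Then U is not γ-decomposable but is δ-decomposable for some δ with γ < δ ≤ ∏_{n<ω} λ_n; in particular, assuming ∏_{n<ω} λ_n = γ⁺, U is γ⁺-decomposable. -/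
open Cardinal

/-- Suppose `U` is a countably complete ultrafilter on `X`, `γ` is a cardinal of
countable cofinality, and `⟨λ n : n < ω⟩` is an increasing sequence of cardinals cofinal in
`γ` such that `U` is `λ n`-decomposable for every `n`.  Then `U` is not `γ`-decomposable but
is `δ`-decomposable for some `δ` with `γ < δ ≤ ∏_{n<ω} λ n`; in particular, if
`∏_{n<ω} λ n = γ⁺`, then `U` is `γ⁺`-decomposable. -/
theorem stmt18 {X : Type u} (U : Ultrafilter X)
    (hcc : ∀ s : Set (Set X), s.Countable → (∀ A ∈ s, A ∈ U) → ⋂₀ s ∈ U)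
    (γ : Cardinal.{u}) (lam : ℕ → Cardinal.{u}) (hmono : StrictMono lam)
    (hlt : ∀ n, lam n < γ) (hsup : (⨆ n, lam n) = γ)
    (hdec : ∀ n, IsDecomposable U (lam n)) :
    (¬ IsDecomposable U γ) ∧
      (∃ δ : Cardinal.{u}, γ < δ ∧ δ ≤ Cardinal.prod lam ∧ IsDecomposable U δ) ∧
      (Cardinal.prod lam = Order.succ γ → IsDecomposable U (Order.succ γ)) := by
  classical
  -- Part 1 : not γ-decomposable
  have part1 : ¬ IsDecomposable U γ := by
    rintro ⟨f, hf⟩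
    letI : IsWellOrder γ.ord.ToType (· < ·) := isWellOrder_lt
    obtain ⟨ϕ⟩ : Nonempty (Quotient.out γ ≃ γ.ord.ToType) := by
      rw [← Cardinal.eq, Cardinal.mk_out, Cardinal.mk_ord_toType]
    set A : ℕ → Set X := fun n =>
      {x | Ordinal.typein (α := γ.ord.ToType) (· < ·) (ϕ (f x)) < (lam n).ord} with hA
    have hcover : ∀ x : X, ∃ n, x ∈ A n := by
      intro x
      have h1 : (Ordinal.typein (α := γ.ord.ToType) (· < ·) (ϕ (f x))).card < γ := by
        rw [← Cardinal.lt_ord]; exact Ordinal.typein_lt_self _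
      have h2 : ∃ n, (Ordinal.typein (α := γ.ord.ToType) (· < ·) (ϕ (f x))).card < lam n := by
        by_contra hcon
        push_neg at hcon
        have h3 := ciSup_le hcon
        rw [hsup] at h3
        exact absurd h3 (not_le.2 h1)
      obtain ⟨n, hn⟩ := h2
      exact ⟨n, Cardinal.lt_ord.2 hn⟩
    have hsome : ∃ n, A n ∈ U := by
      by_contra hcon
      push_neg at hcon
      have hall : ∀ n, (A n)ᶜ ∈ U := fun n => Ultrafilter.compl_mem_iff_notMem.2 (hcon n)
      have hmem : ⋂₀ (Set.range fun n => (A n)ᶜ) ∈ U := by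
        apply hcc _ (Set.countable_range _)
        rintro B ⟨n, rfl⟩; exact hall n
      have hempty : ⋂₀ (Set.range fun n => (A n)ᶜ) = (∅ : Set X) := by
        ext x
        simp only [Set.sInter_range, Set.mem_iInter, Set.mem_compl_iff, Set.mem_empty_iff_false,
          iff_false, not_forall, not_not]
        exact hcover x
      rw [hempty] at hmem
      exact Ultrafilter.empty_notMem hmem
    obtain ⟨n, hn⟩ := hsome
    have hle : #(f '' A n) ≤ lam n := by
      -- inject into (lam n).ord.ToType
      have hsub : ∀ t ∈ f '' A n,
          Ordinal.typein (α := γ.ord.ToType) (· < ·) (ϕ t) < (lam n).ord := by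
        rintro t ⟨x, hx, rfl⟩; exact hx
      let j : (f '' A n) → (lam n).ord.ToType := fun t =>
        Ordinal.ToType.mk (o := _)
          ⟨Ordinal.typein (α := γ.ord.ToType) (· < ·) (ϕ t.1), hsub t.1 t.2⟩
      have hj : Function.Injective j := by
        intro a b hab
        apply Subtype.ext
        have := (Ordinal.ToType.mk (o := (lam n).ord)).injective hab
        have h2 : Ordinal.typein (α := γ.ord.ToType) (· < ·) (ϕ a.1)
            = Ordinal.typein (α := γ.ord.ToType) (· < ·) (ϕ b.1) := congrArg Subtype.val this
        exact ϕ.injective (Ordinal.typein_injective _ h2)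
      calc #(f '' A n) ≤ #((lam n).ord.ToType) := Cardinal.mk_le_of_injective hj
        _ = lam n := Cardinal.mk_ord_toType _
    rw [hf _ hn] at hle
    exact absurd hle (not_le.2 (hlt n))
  have part2 : ∃ δ : Cardinal.{u}, γ < δ ∧ δ ≤ Cardinal.prod lam ∧ IsDecomposable U δ := by
    choose F hF using hdec
    set g : X → (∀ n, Quotient.out (lam n)) := fun x n => F n x with hg
    set S : Set Cardinal.{u} := {c | ∃ A ∈ U, #(g '' A) = c} with hS
    have hSne : S.Nonempty := ⟨#(g '' Set.univ), Set.univ, U.univ_mem, rfl⟩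
    obtain ⟨δ, ⟨A₀, hA₀U, hA₀⟩, hmin⟩ := Cardinal.lt_wf.has_min S hSne
    have hmin' : ∀ A ∈ U, δ ≤ #(g '' A) := fun A hA =>
      not_lt.1 (hmin _ ⟨A, hA, rfl⟩)
    obtain ⟨x₀, hx₀⟩ : A₀.Nonempty :=
      Ultrafilter.nonempty_of_mem hA₀U
    -- modified map landing in g '' A₀
    set g' : X → (∀ n, Quotient.out (lam n)) := fun x => if x ∈ A₀ then g x else g x₀ with hg'
    have hg'mem : ∀ x, g' x ∈ g '' A₀ := by
      intro x
      by_cases h : x ∈ A₀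
      · simp only [hg', if_pos h]; exact ⟨x, h, rfl⟩
      · simp only [hg', if_neg h]; exact ⟨x₀, hx₀, rfl⟩
    have hval : ∀ A ∈ U, #(g' '' A) = δ := by
      intro A hA
      apply le_antisymm
      · have hsub : g' '' A ⊆ g '' A₀ := by rintro t ⟨x, _, rfl⟩; exact hg'mem x
        calc #(g' '' A) ≤ #(g '' A₀) := Cardinal.mk_le_mk_of_subset hsub
          _ = δ := hA₀
      · have hsub : g '' (A ∩ A₀) ⊆ g' '' A := by
          rintro t ⟨x, ⟨hxA, hxA₀⟩, rfl⟩
          exact ⟨x, hxA, by simp [hg', if_pos hxA₀]⟩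
        calc δ ≤ #(g '' (A ∩ A₀)) := hmin' _ (U.inter_mem hA hA₀U)
          _ ≤ #(g' '' A) := Cardinal.mk_le_mk_of_subset hsub
    have hδdec : IsDecomposable U δ := by
      obtain ⟨e⟩ : Nonempty ((g '' A₀ : Set _) ≃ Quotient.out δ) := by
        rw [← Cardinal.eq, Cardinal.mk_out]; exact hA₀
      refine ⟨fun x => e ⟨g' x, hg'mem x⟩, fun A hA => ?_⟩
      have : (fun x => e ⟨g' x, hg'mem x⟩) '' A
          = e '' ((fun x => (⟨g' x, hg'mem x⟩ : (g '' A₀ : Set _))) '' A) := by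
        rw [Set.image_image]
      rw [this, Cardinal.mk_image_eq e.injective, ← hval A hA]
      have : g' '' A = Subtype.val '' ((fun x => (⟨g' x, hg'mem x⟩ : (g '' A₀ : Set _))) '' A) := by
        rw [Set.image_image]
      rw [this, Cardinal.mk_image_eq Subtype.val_injective]
    have hδle : δ ≤ Cardinal.prod lam := by
      rw [← hA₀]
      calc #(g '' A₀) ≤ #(∀ n, Quotient.out (lam n)) := Cardinal.mk_set_le _
        _ = Cardinal.prod lam := rfl
    have hγle : γ ≤ δ := by
      rw [← hsup]
      apply ciSup_le
      intro n
      rw [← hF n _ hA₀U, ← hA₀]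
      have : F n '' A₀ = (fun h : ∀ m, Quotient.out (lam m) => h n) '' (g '' A₀) := by
        rw [Set.image_image]
      rw [this]
      exact Cardinal.mk_image_le
    have hγlt : γ < δ := by
      rcases lt_or_eq_of_le hγle with h | h
      · exact h
      · exact absurd (h ▸ hδdec) part1
    exact ⟨δ, hγlt, hδle, hδdec⟩
  refine ⟨part1, part2, ?_⟩
  intro hprod
  obtain ⟨δ, hγδ, hδle, hδdec⟩ := part2
  rw [hprod] at hδle
  have : δ = Order.succ γ := le_antisymm hδle (Order.succ_le_of_lt hγδ)
  exact this ▸ hδdec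
end
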